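/- For a positive integer n and nonnegative integer k, the sum over i from 0 to n of (-1)^i * C(n,i) * C(2n-2i+1, n+k) equals 2^(n-k) * (C(n,k) + 2*C(n,k-1)). -/

import Mathlib

open Polynomial Finset

lemma poly_key (n : ℕ) :
    ∑ i ∈ Finset.range (n + 1),
        Polynomial.C ((-1 : ℚ) ^ i * (n.choose i)) * (1 + Polynomial.X) ^ (2 * n - 2 * i + 1) =
      (1 + Polynomial.X) * (Polynomial.X ^ n * (Polynomial.X + Polynomial.C 2) ^ n) := by
  have h1 : ((-1 : ℚ[X]) + (1 + X) ^ 2) ^ n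
      = ∑ i ∈ range (n + 1), (-1 : ℚ[X]) ^ i * ((1 + X) ^ 2) ^ (n - i) * ((n.choose i : ℚ[X])) :=
    add_pow _ _ n
  have h2 : ((-1 : ℚ[X]) + (1 + X) ^ 2) = X * (X + C 2) := by
    have : (C 2 : ℚ[X]) = 2 := map_ofNat C 2
    rw [this]; ring
  calc ∑ i ∈ Finset.range (n + 1),
        C ((-1 : ℚ) ^ i * (n.choose i)) * (1 + X) ^ (2 * n - 2 * i + 1)
      = (1 + X) * ∑ i ∈ range (n + 1), (-1 : ℚ[X]) ^ i * ((1 + X) ^ 2) ^ (n - i) * ((n.choose i : ℚ[X])) := by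
        rw [Finset.mul_sum]
        refine Finset.sum_congr rfl fun i hi => ?_
        have hin : i ≤ n := by simpa using Nat.lt_succ_iff.mp (Finset.mem_range.mp hi)
        have : 2 * n - 2 * i + 1 = 2 * (n - i) + 1 := by omega
        rw [this]
        simp [pow_mul, pow_succ, C_mul]
        ring
    _ = (1 + X) * (X * (X + C 2)) ^ n := by rw [← h1, h2]
    _ = (1 + X) * (X ^ n * (X + C 2) ^ n) := by rw [mul_pow]

lemma powA (n k : ℕ) : (2:ℚ) ^ (n - k) * (n.choose k) = (2:ℚ) ^ ((n:ℤ) - k) * (n.choose k) := by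
  rcases le_or_gt k n with h | h
  · have : (n:ℤ) - k = ((n - k : ℕ) : ℤ) := by omega
    rw [this, zpow_natCast]
  · simp [Nat.choose_eq_zero_of_lt h]

/-- For a positive integer `n` and nonnegative integer `k`,
`∑_{i=0}^n (-1)^i C(n,i) C(2n-2i+1, n+k) = 2^(n-k) (C(n,k) + 2 C(n,k-1))`,
where `C(n,-1) = 0` and `2^(n-k)` is taken in `ℚ` with integer exponent. -/
theorem stmt4 (n k : ℕ) (hn : 0 < n) :
    ∑ i ∈ Finset.range (n + 1),
        ((-1 : ℚ) ^ i * (n.choose i) * ((2 * n - 2 * i + 1).choose (n + k))) =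
      (2 : ℚ) ^ ((n : ℤ) - (k : ℤ)) *
        ((n.choose k : ℚ) + 2 * (if 1 ≤ k then ((n.choose (k - 1) : ℚ)) else 0)) := by
  have h := congrArg (fun p : ℚ[X] => p.coeff (n + k)) (poly_key n)
  simp only [finset_sum_coeff, coeff_C_mul, coeff_one_add_X_pow, coeff_X_pow_mul] at h
  -- h : LHS sum = ((1 + X) * (X + C 2)^n).coeff k
  rw [show ((1 + X) * (X ^ n * (X + C 2) ^ n) : ℚ[X])
      = X ^ n * ((1 + X) * (X + C 2) ^ n) by ring, add_comm n k, coeff_X_pow_mul] at h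
  rw [add_comm k n] at h
  rw [h]
  rw [show ((1 + X) * (X + C 2) ^ n : ℚ[X]) = (X + C 2) ^ n + X * (X + C 2) ^ n by ring]
  rw [coeff_add]
  cases k with
  | zero =>
    simp [coeff_X_mul_zero, coeff_X_add_C_pow]
  | succ j =>
    rw [coeff_X_mul, coeff_X_add_C_pow, coeff_X_add_C_pow]
    have h2 : (2:ℚ) ^ (n - j) * (n.choose j)
        = (2:ℚ) ^ ((n:ℤ) - (j+1)) * (2 * (n.choose j)) := by
      rcases le_or_gt j n with hj | hj
      · have e1 : n - j = (n - (j+1)) + 1 ∨ j = n := by omega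
        rcases e1 with e1 | rfl
        · have : (n:ℤ) - (j+1) = ((n - (j+1) : ℕ) : ℤ) := by omega
          rw [this, zpow_natCast, e1]
          ring
        · simp [Nat.sub_self]
      · simp [Nat.choose_eq_zero_of_lt hj]
    have h1 := powA n (j+1)
    push_cast at h1 h2 ⊢
    rw [h1, h2]
    ring
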